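/- Suppose y : ℕ → 2 matches every chopped real (x_α, Π_α) for α < κ, and suppose g : ℕ → ℕ eventually majorizes each function f_α, where f_α(n) is the right endpoint of the next interval of Π_α after the one containing n on which y agrees with x_α. Choose a partition Θ of ℕ into consecutive finite intervals such that for each interval, g of its left endpoint is less than its right endpoint. Then (y, Θ) engulfs every (x_α, Π_α). -/
import Mathlib


/-- `a : ℕ → ℕ` codes a partition of ℕ into consecutive finite intervals
`[a n, a (n+1))` with `a 0 = 0` and `a` strictly increasing. -/
def IntervalPartition (a : ℕ → ℕ) : Prop := a 0 = 0 ∧ StrictMono a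

/-- `y` matches the chopped real `(x, a)`: `y` agrees with `x` on infinitely
many intervals of the partition. -/
def Matches (y : ℕ → Bool) (x : ℕ → Bool) (a : ℕ → ℕ) : Prop :=
  { n : ℕ | ∀ i ∈ Set.Ico (a n) (a (n + 1)), y i = x i }.Infinite

/-- The set of reals matching the chopped real `(x, a)`. -/
def MatchSet (x : ℕ → Bool) (a : ℕ → ℕ) : Set (ℕ → Bool) := { y | Matches y x a }

/-- `(x, a)` engulfs `(x', a')`: all but finitely many intervals of `a` include
an interval of `a'` on which `x` and `x'` agree. -/
def Engulfs (x : ℕ → Bool) (a : ℕ → ℕ) (x' : ℕ → Bool) (a' : ℕ → ℕ) : Prop :=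
  { n : ℕ | ¬ ∃ m : ℕ, Set.Ico (a' m) (a' (m + 1)) ⊆ Set.Ico (a n) (a (n + 1)) ∧
      ∀ i ∈ Set.Ico (a' m) (a' (m + 1)), x i = x' i }.Finite

/-- Suppose `y` matches every chopped real `(x i, P i)`, `f i n` is the right
endpoint of the next interval of `P i` after the one containing `n` on which
`y` agrees with `x i`, `g` eventually majorizes every `f i`, and `Θ` is a
partition such that `g` of the left endpoint of each interval is less than its
right endpoint.  Then `(y, Θ)` engulfs every `(x i, P i)`. -/
theorem stmt14 {ι : Type} (x : ι → ℕ → Bool) (P : ι → ℕ → ℕ)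
    (hP : ∀ i, IntervalPartition (P i))
    (y : ℕ → Bool) (hmatch : ∀ i, Matches y (x i) (P i))
    (f : ι → ℕ → ℕ)
    (hf : ∀ i n, ∃ m : ℕ, n < P i m ∧
      (∀ j ∈ Set.Ico (P i m) (P i (m + 1)), y j = x i j) ∧
      f i n = P i (m + 1) ∧
      ∀ m' : ℕ, n < P i m' →
        (∀ j ∈ Set.Ico (P i m') (P i (m' + 1)), y j = x i j) → m ≤ m')
    (g : ℕ → ℕ) (hg : ∀ i, ∀ᶠ n in Filter.atTop, f i n ≤ g n)
    (Θ : ℕ → ℕ) (hΘ : IntervalPartition Θ)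
    (hΘg : ∀ k, g (Θ k) < Θ (k + 1)) :
    ∀ i, Engulfs y Θ (x i) (P i) := by
  intro i
  obtain ⟨N, hN⟩ := Filter.eventually_atTop.1 (hg i)
  apply Set.Finite.subset (Set.finite_Iio N)
  intro k hk
  simp only [Set.mem_setOf_eq] at hk
  by_contra h
  simp only [Set.mem_Iio, not_lt] at h
  apply hk
  have hNk : N ≤ Θ k := le_trans h hΘ.2.le_apply
  obtain ⟨m, hm1, hm2, hm3, _⟩ := hf i (Θ k)
  have hle : P i (m + 1) ≤ g (Θ k) := hm3 ▸ hN (Θ k) hNk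
  refine ⟨m, ?_, fun j hj => hm2 j hj⟩
  intro j hj
  simp only [Set.mem_Ico] at hj ⊢
  exact ⟨le_trans hm1.le hj.1, lt_of_lt_of_le hj.2 (le_of_lt (lt_of_le_of_lt hle (hΘg k)))⟩
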